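/- Let A be an m × n integer matrix and c ∈ ℤ^m. Let X = {x ∈ ℕ^n : A x = c} and X₀ = {x ∈ ℕ^n : A x = 0}. Then every vector in X can be written as the sum of one vector x ∈ X with ‖x‖₁ ≤ ‖c‖₁ · (2 + max_i ∑_j |A_{i,j}|)^m plus a finite sum of vectors x₀ ∈ X₀ each with ‖x₀‖₁ ≤ (2 + max_i ∑_j |A_{i,j}|)^m. -/

import Mathlib

open Finset
section helpers
variable {ι : Type*} [Fintype ι] [DecidableEq ι]

private lemma sum_map_eq_sum_count (l : List ι) (g : ι → ℤ) :
    (l.map g).sum = ∑ a, (l.count a : ℤ) * g a := by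
  induction l with
  | nil => simp
  | cons b l ih =>
      simp only [List.map_cons, List.sum_cons, ih, List.count_cons, beq_iff_eq]
      have h1 : ∑ a, ((l.count a + if b = a then 1 else 0 : ℕ) : ℤ) * g a
          = ∑ a, ((l.count a : ℤ) * g a + if b = a then g a else 0) := by
        apply Finset.sum_congr rfl
        intro a _
        push_cast
        split <;> ring
      rw [h1, Finset.sum_add_distrib, Finset.sum_ite_eq univ b g]
      simp [add_comm]

private lemma sum_count_eq_length (l : List ι) : ∑ a, l.count a = l.length := by
  induction l with
  | nil => simp
  | cons b l ih =>
      simp only [List.count_cons, List.length_cons, beq_iff_eq, Finset.sum_add_distrib, ih,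
        Finset.sum_ite_eq univ b (fun _ => 1), Finset.mem_univ, if_true]

end helpers
section mshelpers
variable {α : Type*} {κ : Type*} [Fintype κ]

private lemma msum_apply (s : Multiset α) (f : α → κ → ℕ) (k : κ) :
    (s.map f).sum k = (s.map fun a => f a k).sum := by
  induction s using Multiset.induction_on with
  | empty => simp
  | cons b s ih => simp [ih]

private lemma msum_cast (s : Multiset α) (f : α → ℕ) :
    (((s.map f).sum : ℕ) : ℤ) = (s.map fun a => ((f a : ℕ) : ℤ)).sum := by
  induction s using Multiset.induction_on with
  | empty => simp
  | cons b s ih => simp [ih]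

private lemma msum_swap {M : Type*} [AddCommMonoid M] (s : Multiset α) (g : α → κ → M) :
    ∑ k, (s.map fun a => g a k).sum = (s.map fun a => ∑ k, g a k).sum := by
  induction s using Multiset.induction_on with
  | empty => simp
  | cons b s ih => simp [Finset.sum_add_distrib, ih]

private lemma msum_card_le (s : Multiset α) (f : α → ℕ) (h : ∀ a ∈ s, 1 ≤ f a) :
    Multiset.card s ≤ (s.map f).sum := by
  induction s using Multiset.induction_on with
  | empty => simp
  | cons b s ih =>
      simp only [Multiset.card_cons, Multiset.map_cons, Multiset.sum_cons]
      have hb := h b (Multiset.mem_cons_self b s)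
      have := ih (fun a ha => h a (Multiset.mem_cons_of_mem ha))
      omega

private lemma msum_le (s : Multiset α) (f g : α → ℕ) (h : ∀ a ∈ s, f a ≤ g a) :
    (s.map f).sum ≤ (s.map g).sum := by
  induction s using Multiset.induction_on with
  | empty => simp
  | cons b s ih =>
      simp only [Multiset.map_cons, Multiset.sum_cons]
      have hb := h b (Multiset.mem_cons_self b s)
      have := ih (fun a ha => h a (Multiset.mem_cons_of_mem ha))
      omega

private lemma msum_const (s : Multiset α) (c : ℕ) :
    (s.map fun _ => c).sum = Multiset.card s * c := by
  induction s using Multiset.induction_on with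
  | empty => simp
  | cons b s ih => simp [ih]; ring

private lemma msum_mul_left (s : Multiset α) (f : α → ℤ) (b : ℤ) :
    b * (s.map f).sum = (s.map fun a => b * f a).sum := by
  induction s using Multiset.induction_on with
  | empty => simp
  | cons x s ih => simp [mul_add, ih]

end mshelpers

section balance
variable {ι : Type*} [Fintype ι] [DecidableEq ι]

private def BInv (μ n : ι → ℕ) : Prop :=
  ∀ j j', 0 < μ j → 0 < μ j' → n j' * μ j ≤ n j * μ j' + μ j'

private lemma count_cons_eq (j₀ a : ι) (l : List ι) :
    (j₀ :: l).count a = l.count a + if j₀ = a then 1 else 0 := by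
  by_cases h : j₀ = a
  · simp [List.count_cons, h]
  · simp [List.count_cons, h, fun hh : a = j₀ => h hh.symm]

private lemma exists_balanced (μ : ι → ℕ) :
    ∀ (N : ℕ) (nn : ι → ℕ), (∀ j, nn j ≤ μ j) → BInv μ nn →
      (∑ j, (μ j - nn j)) = N →
      ∃ L : List ι, (∀ a, nn a + L.count a = μ a) ∧
        ∀ k, (∀ j, nn j + (L.take k).count j ≤ μ j) ∧
          BInv μ (fun j => nn j + (L.take k).count j) := by
  intro N
  induction N with
  | zero =>
      intro nn hle hI hsum
      refine ⟨[], fun a => ?_, fun k => ?_⟩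
      · have h1 := (Finset.sum_eq_zero_iff.mp hsum) a (Finset.mem_univ a)
        have h2 := hle a
        simp only [List.count_nil]
        omega
      · constructor
        · intro j; simpa using hle j
        · have : (fun j => nn j + (([] : List ι).take k).count j) = nn := by
            funext j; simp
          rw [this]; exact hI
  | succ N ih =>
      intro nn hle hI hsum
      have hne : (univ.filter fun j => nn j < μ j).Nonempty := by
        by_contra h
        rw [Finset.not_nonempty_iff_eq_empty, Finset.filter_eq_empty_iff] at h
        have : ∀ j ∈ univ, μ j - nn j = 0 := fun j hj => by
          have := h hj; omega
        rw [Finset.sum_congr rfl this] at hsum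
        simp at hsum
      obtain ⟨j₀, hj₀, hmin⟩ := Finset.exists_min_image _
        (fun j => ((nn j : ℚ) + 1) / (μ j : ℚ)) hne
      rw [Finset.mem_filter] at hj₀
      have hj₀lt : nn j₀ < μ j₀ := hj₀.2
      have key : ∀ j, nn j < μ j → (nn j₀ + 1) * μ j ≤ (nn j + 1) * μ j₀ := by
        intro j hj
        have hmem : j ∈ univ.filter fun j => nn j < μ j := by
          simp [Finset.mem_filter, hj]
        have h := hmin j hmem
        have hμj : (0:ℚ) < (μ j : ℚ) := by exact_mod_cast Nat.pos_of_ne_zero (by omega)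
        have hμj₀ : (0:ℚ) < (μ j₀ : ℚ) := by exact_mod_cast Nat.pos_of_ne_zero (by omega)
        rw [div_le_div_iff₀ hμj₀ hμj] at h
        have h2 : ((nn j₀ : ℚ) + 1) * μ j ≤ ((nn j : ℚ) + 1) * μ j₀ := h
        exact_mod_cast h2
      set n' : ι → ℕ := fun j => nn j + if j₀ = j then 1 else 0 with hn'
      have e1 : n' j₀ = nn j₀ + 1 := by simp [hn']
      have e2 : ∀ x, j₀ ≠ x → n' x = nn x := by
        intro x h; simp [hn', h]
      have hle' : ∀ j, n' j ≤ μ j := by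
        intro j
        by_cases h : j₀ = j
        · subst h; omega
        · rw [e2 j h]; exact hle j
      have hI' : BInv μ n' := by
        intro j j' hμj hμj'
        by_cases h : j₀ = j'
        · subst h
          by_cases hj : j₀ = j
          · subst hj
            rw [e1]
            nlinarith
          · rw [e1, e2 j hj]
            by_cases hlt : nn j < μ j
            · have := key j hlt
              nlinarith
            · have hnj : nn j = μ j := by have := hle j; omega
              have h1 : (nn j₀ + 1) * μ j ≤ μ j₀ * μ j := Nat.mul_le_mul_right _ hj₀lt
              rw [hnj]
              nlinarith
        · have h0 := hI j j' hμj hμj'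
          have h2 : nn j ≤ n' j := by
            by_cases hj : j₀ = j
            · subst hj; omega
            · rw [e2 j hj]
          rw [e2 j' h]
          nlinarith
      have hsum' : ∑ j, (μ j - n' j) = N := by
        have hcg : ∀ j ∈ univ, μ j - nn j = (μ j - n' j) + if j₀ = j then 1 else 0 := by
          intro j _
          by_cases h : j₀ = j
          · subst h; rw [e1]; simp; omega
          · rw [e2 j h]; simp [h]
        rw [Finset.sum_congr rfl hcg, Finset.sum_add_distrib] at hsum
        rw [Finset.sum_ite_eq univ j₀ (fun _ => 1)] at hsum
        simp only [Finset.mem_univ, if_true] at hsum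
        omega
      obtain ⟨L', hcnt', hpre'⟩ := ih n' hle' hI' hsum'
      refine ⟨j₀ :: L', fun a => ?_, fun k => ?_⟩
      · have hc := hcnt' a
        rw [count_cons_eq]
        by_cases h : j₀ = a
        · rw [if_pos h, ← h]; rw [← h, e1] at hc; omega
        · rw [e2 a h] at hc; rw [if_neg h]; omega
      · cases k with
        | zero =>
            constructor
            · intro j; simpa using hle j
            · have : (fun j => nn j + ((j₀ :: L').take 0).count j) = nn := by
                funext j; simp
              rw [this]; exact hI
        | succ k =>
            have hp := hpre' k
            have heq : ∀ j, nn j + ((j₀ :: L').take (k+1)).count j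
                = n' j + (L'.take k).count j := by
              intro j
              rw [List.take_succ_cons, count_cons_eq]
              by_cases h : j₀ = j
              · rw [if_pos h, ← h, e1]; omega
              · rw [e2 j h, if_neg h]; omega
            constructor
            · intro j; rw [heq j]; exact hp.1 j
            · have : (fun j => nn j + ((j₀ :: L').take (k+1)).count j)
                  = fun j => n' j + (L'.take k).count j := funext heq
              rw [this]; exact hp.2

end balance

section boxsec
variable {ι : Type*} [Fintype ι] [DecidableEq ι] {κ : Type*}

private lemma box_of_inv (v : ι → κ → ℤ) (μ : ι → ℕ) (nn : ι → ℕ)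
    (hzero : ∀ i, ∑ a, (μ a : ℤ) * v a i = 0)
    (hle : ∀ j, nn j ≤ μ j) (hI : BInv μ nn) (i : κ) :
    -(∑ a, max (v a i) 0) ≤ ∑ a, (nn a : ℤ) * v a i ∧
      ∑ a, (nn a : ℤ) * v a i ≤ ∑ a, max (-(v a i)) 0 := by
  by_cases hall : ∀ j, μ j = 0
  · have h0 : ∀ a ∈ univ, (nn a : ℤ) * v a i = 0 := by
      intro a _
      have : nn a = 0 := by have := hle a; have := hall a; omega
      simp [this]
    rw [Finset.sum_congr rfl h0]
    constructor
    · simp only [Finset.sum_const_zero]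
      have : (0:ℤ) ≤ ∑ a, max (v a i) 0 :=
        Finset.sum_nonneg (fun a _ => le_max_right _ _)
      omega
    · simp only [Finset.sum_const_zero]
      exact Finset.sum_nonneg (fun a _ => le_max_right _ _)
  · push_neg at hall
    obtain ⟨jw, hjw⟩ := hall
    have hne : (univ.filter fun j => 0 < μ j).Nonempty :=
      ⟨jw, by simp [Finset.mem_filter]; omega⟩
    obtain ⟨js, hjs, hmax⟩ := Finset.exists_max_image _
      (fun j => (nn j : ℚ) / (μ j : ℚ)) hne
    rw [Finset.mem_filter] at hjs
    have hμs : 0 < μ js := hjs.2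
    have hmaxint : ∀ j, 0 < μ j → nn j * μ js ≤ nn js * μ j := by
      intro j hj
      have h := hmax j (by simp [Finset.mem_filter]; omega)
      have hq1 : (0:ℚ) < (μ j : ℚ) := by exact_mod_cast hj
      have hq2 : (0:ℚ) < (μ js : ℚ) := by exact_mod_cast hμs
      rw [div_le_div_iff₀ hq1 hq2] at h
      exact_mod_cast h
    set lam : ι → ℤ := fun a => (nn js : ℤ) * μ a - nn a * μ js with hlam
    have hlam0 : ∀ a, 0 ≤ lam a := by
      intro a
      by_cases h : 0 < μ a
      · have := hmaxint a h
        simp only [hlam]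
        push_cast
        nlinarith
      · have hμa : μ a = 0 := by omega
        have hna : nn a = 0 := by have := hle a; omega
        simp [hlam, hμa, hna]
    have hlamle : ∀ a, lam a ≤ μ js := by
      intro a
      by_cases h : 0 < μ a
      · have h2 := hI a js h hμs
        simp only [hlam]
        have h3 : (nn js * μ a : ℤ) ≤ nn a * μ js + μ js := by exact_mod_cast h2
        nlinarith
      · have hμa : μ a = 0 := by omega
        have hna : nn a = 0 := by have := hle a; omega
        simp [hlam, hμa, hna]
    have hkey : (μ js : ℤ) * (∑ a, (nn a : ℤ) * v a i) = -∑ a, lam a * v a i := by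
      have hc : ∀ a ∈ univ, (lam a) * v a i
          = (nn js : ℤ) * ((μ a : ℤ) * v a i) - (μ js : ℤ) * ((nn a : ℤ) * v a i) := by
        intro a _
        simp only [hlam]
        ring
      rw [Finset.sum_congr rfl hc, Finset.sum_sub_distrib, ← Finset.mul_sum, ← Finset.mul_sum,
        hzero i]
      ring
    have hμsz : (0:ℤ) < (μ js : ℤ) := by exact_mod_cast hμs
    constructor
    · -- lower bound
      have hs : ∑ a, lam a * v a i ≤ ∑ a, (μ js : ℤ) * max (v a i) 0 := by
        apply Finset.sum_le_sum
        intro a _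
        rcases le_or_gt 0 (v a i) with hv | hv
        · have h1 : lam a * v a i ≤ (μ js : ℤ) * v a i :=
            mul_le_mul_of_nonneg_right (hlamle a) hv
          have h2 : max (v a i) 0 = v a i := max_eq_left hv
          rw [h2]; exact h1
        · have h1 : lam a * v a i ≤ 0 :=
            mul_nonpos_of_nonneg_of_nonpos (hlam0 a) (le_of_lt hv)
          have h2 : (0:ℤ) ≤ (μ js : ℤ) * max (v a i) 0 :=
            mul_nonneg (le_of_lt hμsz) (le_max_right _ _)
          omega
      have h3 : (μ js : ℤ) * (-(∑ a, max (v a i) 0)) ≤ (μ js : ℤ) * (∑ a, (nn a : ℤ) * v a i) := by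
        rw [hkey, mul_neg, Finset.mul_sum]
        exact neg_le_neg hs
      exact (mul_le_mul_iff_right₀ hμsz).mp h3
    · -- upper bound
      have hs : -∑ a, lam a * v a i ≤ ∑ a, (μ js : ℤ) * max (-(v a i)) 0 := by
        rw [← Finset.sum_neg_distrib]
        apply Finset.sum_le_sum
        intro a _
        rcases le_or_gt 0 (v a i) with hv | hv
        · have h1 : 0 ≤ lam a * v a i := mul_nonneg (hlam0 a) hv
          have h2 : (0:ℤ) ≤ (μ js : ℤ) * max (-(v a i)) 0 :=
            mul_nonneg (le_of_lt hμsz) (le_max_right _ _)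
          omega
        · have h1 : lam a * (-(v a i)) ≤ (μ js : ℤ) * (-(v a i)) :=
            mul_le_mul_of_nonneg_right (hlamle a) (by omega)
          have h2 : max (-(v a i)) 0 = -(v a i) := max_eq_left (by omega)
          rw [h2]
          nlinarith
      have h3 : (μ js : ℤ) * (∑ a, (nn a : ℤ) * v a i) ≤ (μ js : ℤ) * ∑ a, max (-(v a i)) 0 := by
        rw [hkey, Finset.mul_sum]
        exact hs
      exact (mul_le_mul_iff_right₀ hμsz).mp h3

end boxsec

section chunksec
variable {ι : Type*} [DecidableEq ι] {κ : Type*} [Fintype κ] [DecidableEq κ]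

private def vsumI (v : ι → κ → ℤ) (l : List ι) (i : κ) : ℤ := (l.map fun a => v a i).sum

private lemma vsumI_append (v : ι → κ → ℤ) (l l' : List ι) (i : κ) :
    vsumI v (l ++ l') i = vsumI v l i + vsumI v l' i := by
  simp [vsumI]

private lemma chunk_lemma (v : ι → κ → ℤ) (lo hi : κ → ℤ) :
    ∀ (F : ℕ) (L : List ι), L.length ≤ F → (∀ i, vsumI v L i = 0) →
      (∀ k i, lo i ≤ vsumI v (L.take k) i ∧ vsumI v (L.take k) i ≤ hi i) →
      ∃ C : List (List ι),
        (∀ a, (C.map fun ch => ch.count a).sum = L.count a) ∧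
        ∀ ch ∈ C, (∀ i, vsumI v ch i = 0) ∧
          ch.length ≤ (Finset.Icc lo hi).card := by
  intro F
  induction F with
  | zero =>
      intro L hF h0 _
      have : L = [] := List.length_eq_zero_iff.mp (Nat.le_zero.mp hF)
      subst this
      exact ⟨[], by simp, by simp⟩
  | succ F ih =>
      intro L hF h0 hbox
      set T := (Finset.Icc lo hi).card with hT
      by_cases hlen : L.length ≤ T
      · refine ⟨[L], by simp, ?_⟩
        intro ch hch
        simp only [List.mem_singleton] at hch
        subst hch
        exact ⟨h0, hlen⟩
      · push_neg at hlen
        have hmaps : ∀ k ∈ Finset.range (T + 1),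
            (fun i => vsumI v (L.take k) i) ∈ Finset.Icc lo hi := by
          intro k _
          rw [Finset.mem_Icc]
          exact ⟨fun i => (hbox k i).1, fun i => (hbox k i).2⟩
        have hcard : (Finset.Icc lo hi).card < (Finset.range (T + 1)).card := by
          rw [Finset.card_range]; omega
        obtain ⟨k₁, hk₁, k₂, hk₂, hne, heqf⟩ :=
          Finset.exists_ne_map_eq_of_card_lt_of_maps_to hcard hmaps
        rw [Finset.mem_range] at hk₁ hk₂
        -- wlog a < b
        obtain ⟨a, b, hab, hbT, heq⟩ :
            ∃ a b, a < b ∧ b ≤ T ∧ ∀ i, vsumI v (L.take a) i = vsumI v (L.take b) i := by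
          rcases lt_or_gt_of_ne hne with h | h
          · exact ⟨k₁, k₂, h, by omega, fun i => congrFun heqf i⟩
          · exact ⟨k₂, k₁, h, by omega, fun i => (congrFun heqf i).symm⟩
        set mid := (L.take b).drop a with hmid
        set L2 := L.take a ++ L.drop b with hL2
        have htt : L.take a ++ mid = L.take b := by
          rw [hmid]
          have : L.take a = (L.take b).take a := by
            rw [List.take_take, min_eq_left (le_of_lt hab)]
          rw [this, List.take_append_drop]
        have hmidsum : ∀ i, vsumI v mid i = 0 := by
          intro i
          have := vsumI_append v (L.take a) mid i
          rw [htt] at this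
          have h2 := heq i
          omega
        have hmidlen : mid.length ≤ T := by
          have : (L.take a).length + mid.length = (L.take b).length := by
            rw [← htt, List.length_append]
          rw [List.length_take, List.length_take] at this
          have hbl : b ≤ L.length := by omega
          have hal : a ≤ L.length := by omega
          rw [min_eq_left hbl, min_eq_left hal] at this
          omega
        have hL2len : L2.length ≤ F := by
          rw [hL2, List.length_append, List.length_take, List.length_drop]
          have hal : a ≤ L.length := by omega
          rw [min_eq_left hal]
          omega
        have hLsplit : L = L.take a ++ mid ++ L.drop b := by
          rw [htt, List.take_append_drop]
        have hL2sum : ∀ i, vsumI v L2 i = 0 := by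
          intro i
          have h1 := h0 i
          rw [hLsplit, vsumI_append, vsumI_append] at h1
          rw [hL2, vsumI_append]
          have := hmidsum i
          omega
        have hL2box : ∀ k i, lo i ≤ vsumI v (L2.take k) i ∧ vsumI v (L2.take k) i ≤ hi i := by
          intro k i
          rcases le_or_gt k a with hka | hka
          · have : L2.take k = L.take k := by
              rw [hL2, List.take_append]
              have h1 : L.take k = (L.take a).take k := by
                rw [List.take_take, min_eq_left hka]
              have h2 : k - (L.take a).length = 0 := by
                rw [List.length_take]
                have : a ≤ L.length := by omega
                rw [min_eq_left this]
                omega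
              rw [h2, List.take_zero, List.append_nil, ← h1]
            rw [this]
            exact hbox k i
          · have hal : a ≤ L.length := by omega
            have : vsumI v (L2.take k) i = vsumI v (L.take (b + (k - a))) i := by
              rw [hL2, List.take_append]
              have hlt : (L.take a).length = a := by
                rw [List.length_take, min_eq_left hal]
              have h1 : (L.take a).take k = L.take a := by
                apply List.take_of_length_le
                rw [hlt]; omega
              rw [h1, hlt]
              have h3 : L.take (b + (k - a)) = L.take b ++ (L.drop b).take (k - a) := by
                rw [List.take_add]
              rw [vsumI_append, h3, vsumI_append]
              have h4 := heq i
              omega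
            rw [this]
            exact hbox (b + (k - a)) i
        obtain ⟨C2, hC2cnt, hC2⟩ := ih L2 hL2len hL2sum hL2box
        refine ⟨mid :: C2, ?_, ?_⟩
        · intro a'
          have h1 : L.count a' = (L.take a).count a' + mid.count a' + (L.drop b).count a' := by
            conv_lhs => rw [hLsplit]
            rw [List.count_append, List.count_append]
          have h2 : L2.count a' = (L.take a).count a' + (L.drop b).count a' := by
            rw [hL2, List.count_append]
          simp only [List.map_cons, List.sum_cons, hC2cnt a', h1, h2]
          omega
        · intro ch hch
          rcases List.mem_cons.mp hch with h | h
          · subst h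
            exact ⟨hmidsum, hmidlen⟩
          · exact hC2 ch h

end chunksec

section chunksec
variable {ι : Type*} [DecidableEq ι] {κ : Type*} [Fintype κ] [DecidableEq κ]

private lemma icc_card_le (lo hi : κ → ℤ) (B : ℕ)
    (h : ∀ i, (hi i + 1 - lo i).toNat ≤ B) :
    (Finset.Icc lo hi).card ≤ B ^ (Fintype.card κ) := by
  rw [Pi.card_Icc]
  calc ∏ i, (Finset.Icc (lo i) (hi i)).card ≤ ∏ _i : κ, B :=
        Finset.prod_le_prod (fun _ _ => Nat.zero_le _)
          (fun i _ => by rw [Int.card_Icc]; exact h i)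
    _ = B ^ (Fintype.card κ) := by
        rw [Finset.prod_const, Finset.card_univ]

end chunksec

open Finset in
/-- Pottier's decomposition theorem.  Let `A` be an `m × n` integer matrix and
`c ∈ ℤ^m`.  Every nonnegative integer solution `y` of `A y = c` is the sum of a
nonnegative solution `x` of `A x = c` with
`‖x‖₁ ≤ ‖c‖₁ · (2 + max_i ∑_j |A_{i,j}|)^m` and a finite (possibly empty)
multiset of nonnegative solutions `x₀` of the homogeneous system `A x₀ = 0`,
each with `‖x₀‖₁ ≤ (2 + max_i ∑_j |A_{i,j}|)^m`. -/
theorem stmt8 (m n : ℕ) (A : Matrix (Fin m) (Fin n) ℤ) (c : Fin m → ℤ)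
    (y : Fin n → ℕ) (hy : ∀ i, ∑ j, A i j * (y j : ℤ) = c i) :
    ∃ (x : Fin n → ℕ) (S : Multiset (Fin n → ℕ)),
      (∀ i, ∑ j, A i j * (x j : ℤ) = c i) ∧
      (∀ v ∈ S, ∀ i, ∑ j, A i j * (v j : ℤ) = 0) ∧
      y = x + S.sum ∧
      (∑ j, x j) ≤ (∑ i, (c i).natAbs) *
        (2 + Finset.univ.sup fun i => ∑ j, (A i j).natAbs) ^ m ∧
      (∀ v ∈ S, (∑ j, v j) ≤
        (2 + Finset.univ.sup fun i => ∑ j, (A i j).natAbs) ^ m) := by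
  letI : BEq (Fin n ⊕ Fin m) := instBEqOfDecidableEq
  set B : ℕ := 2 + Finset.univ.sup fun i => ∑ j, (A i j).natAbs with hB
  set vv : (Fin n ⊕ Fin m) → Fin m → ℤ :=
    Sum.elim (fun j i => A i j) (fun i' i => if i' = i then -(c i').sign else 0) with hvv
  set μ : (Fin n ⊕ Fin m) → ℕ := Sum.elim y (fun i' => (c i').natAbs) with hμ
  set P : Fin m → ℤ := fun i => ∑ a, max (vv a i) 0 with hP
  set Q : Fin m → ℤ := fun i => ∑ a, max (-(vv a i)) 0 with hQ
  -- the extended system is homogeneous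
  have hzero : ∀ i, ∑ a, (μ a : ℤ) * vv a i = 0 := by
    intro i
    rw [Fintype.sum_sum_type]
    have h1 : ∑ j, (μ (Sum.inl j) : ℤ) * vv (Sum.inl j) i = c i := by
      rw [← hy i]
      apply Finset.sum_congr rfl
      intro j _
      simp only [hμ, hvv, Sum.elim_inl]
      ring
    have h2 : ∑ i', (μ (Sum.inr i') : ℤ) * vv (Sum.inr i') i = -(c i) := by
      have hc : ∀ i' ∈ univ, (μ (Sum.inr i') : ℤ) * vv (Sum.inr i') i
          = if i' = i then ((c i').natAbs : ℤ) * (-(c i').sign) else 0 := by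
        intro i' _
        simp only [hμ, hvv, Sum.elim_inr, mul_ite, mul_zero]
      rw [Finset.sum_congr rfl hc, Finset.sum_ite_eq' univ i
        (fun i' => ((c i').natAbs : ℤ) * (-(c i').sign))]
      simp only [Finset.mem_univ, if_true, mul_neg]
      rw [mul_comm]
      rw [Int.sign_mul_natAbs]
    rw [h1, h2]
    ring
  -- row norms
  have hrow : ∀ i : Fin m, P i + Q i ≤ (B : ℤ) - 1 := by
    intro i
    have habs : P i + Q i = ∑ a, |vv a i| := by
      rw [hP, hQ, ← Finset.sum_add_distrib]
      apply Finset.sum_congr rfl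
      intro a _
      rcases le_or_gt 0 (vv a i) with h | h
      · rw [max_eq_left h, max_eq_right (by omega), abs_of_nonneg h]; ring
      · rw [max_eq_right (le_of_lt h), max_eq_left (by omega), abs_of_neg h]; ring
    rw [habs, Fintype.sum_sum_type]
    have h1 : ∑ j, |vv (Sum.inl j) i| = ∑ j, ((A i j).natAbs : ℤ) := by
      apply Finset.sum_congr rfl
      intro j _
      simp only [hvv, Sum.elim_inl]
      exact Int.abs_eq_natAbs _
    have h2 : ∑ i', |vv (Sum.inr i') i| ≤ 1 := by
      have hc : ∀ i' ∈ univ, |vv (Sum.inr i') i|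
          = if i' = i then |(-(c i').sign)| else 0 := by
        intro i' _
        simp only [hvv, Sum.elim_inr, apply_ite (abs : ℤ → ℤ), abs_zero]
      rw [Finset.sum_congr rfl hc, Finset.sum_ite_eq' univ i (fun i' => |(-(c i').sign)|)]
      simp only [Finset.mem_univ, if_true, abs_neg]
      rw [Int.abs_eq_natAbs, Int.natAbs_sign]
      split <;> simp
    have h3 : ∑ j, ((A i j).natAbs : ℤ) ≤ (B : ℤ) - 2 := by
      have h4 : (∑ j, (A i j).natAbs) ≤ Finset.univ.sup fun i => ∑ j, (A i j).natAbs :=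
        Finset.le_sup (f := fun i => ∑ j, (A i j).natAbs) (Finset.mem_univ i)
      have h5 : ((∑ j, (A i j).natAbs : ℕ) : ℤ) ≤ ((Finset.univ.sup fun i => ∑ j, (A i j).natAbs : ℕ) : ℤ) := by
        exact_mod_cast h4
      push_cast at h5 ⊢
      omega
    rw [h1] at *
    omega
  -- balanced ordering
  obtain ⟨L, hLcnt, hLpre⟩ := exists_balanced μ (∑ j, (μ j - 0)) (fun _ => 0)
    (fun j => Nat.zero_le _) (fun j j' _ _ => by simp) rfl
  have hLcnt' : ∀ a, L.count a = μ a := fun a => by have := hLcnt a; omega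
  -- prefix sums lie in the box
  have hLbox : ∀ k i, -(P i) ≤ vsumI vv (L.take k) i ∧ vsumI vv (L.take k) i ≤ Q i := by
    intro k i
    have hpre := hLpre k
    have hle : ∀ j, (L.take k).count j ≤ μ j := by
      intro j; have := hpre.1 j; omega
    have hIk : BInv μ (fun j => (L.take k).count j) := by
      have heq : (fun j => 0 + (L.take k).count j) = fun j => (L.take k).count j := by
        funext j; omega
      have := hpre.2
      rw [heq] at this
      exact this
    have hbx := box_of_inv vv μ (fun j => (L.take k).count j) hzero hle hIk i
    have hvs : vsumI vv (L.take k) i = ∑ a, ((L.take k).count a : ℤ) * vv a i :=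
      sum_map_eq_sum_count (L.take k) (fun a => vv a i)
    rw [hvs]
    exact hbx
  -- total sum of L is zero
  have hLsum : ∀ i, vsumI vv L i = 0 := by
    intro i
    rw [vsumI, sum_map_eq_sum_count L (fun a => vv a i)]
    rw [← hzero i]
    apply Finset.sum_congr rfl
    intro a _
    rw [hLcnt' a]
  -- size of the box
  have hTB : (Finset.Icc (fun i => -(P i)) Q).card ≤ B ^ m := by
    have := icc_card_le (fun i => -(P i)) Q B (fun i => by
      have := hrow i
      have hQ0 : (0:ℤ) ≤ Q i := Finset.sum_nonneg (fun a _ => le_max_right _ _)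
      have hP0 : (0:ℤ) ≤ P i := Finset.sum_nonneg (fun a _ => le_max_right _ _)
      rw [Int.toNat_le]
      push_cast
      omega)
    rwa [Fintype.card_fin] at this
  -- chunk decomposition
  obtain ⟨C, hCcnt, hCprop⟩ := chunk_lemma vv (fun i => -(P i)) Q L.length L le_rfl hLsum hLbox
  -- move to multisets
  set MC : Multiset (List (Fin n ⊕ Fin m)) := (C : Multiset (List (Fin n ⊕ Fin m))) with hMC
  have hMCcnt : ∀ a, (MC.map fun ch => ch.count a).sum = μ a := by
    intro a
    rw [hMC]
    have h1 : ((C : Multiset (List (Fin n ⊕ Fin m))).map fun ch => ch.count a).sum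
        = (C.map fun ch => ch.count a).sum := by
      simp
    rw [h1, hCcnt a, hLcnt' a]
  have hMCmem : ∀ ch ∈ MC, (∀ i, vsumI vv ch i = 0) ∧ ch.length ≤ B ^ m := by
    intro ch hch
    rw [hMC, Multiset.mem_coe] at hch
    obtain ⟨h1, h2⟩ := hCprop ch hch
    exact ⟨h1, le_trans h2 hTB⟩
  -- expanded zero-sum identity for chunks
  have key_ch : ∀ ch ∈ MC, ∀ i,
      ∑ j, A i j * ((ch.count (Sum.inl j) : ℕ) : ℤ)
        = (c i).sign * ((ch.count (Sum.inr i) : ℕ) : ℤ) := by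
    intro ch hch i
    have h0 := (hMCmem ch hch).1 i
    have h1 : vsumI vv ch i = ∑ a, (ch.count a : ℤ) * vv a i :=
      sum_map_eq_sum_count ch (fun a => vv a i)
    rw [h1, Fintype.sum_sum_type] at h0
    have h2 : ∑ i', (ch.count (Sum.inr i') : ℤ) * vv (Sum.inr i') i
        = (ch.count (Sum.inr i) : ℤ) * (-(c i).sign) := by
      have hc : ∀ i' ∈ univ, (ch.count (Sum.inr i') : ℤ) * vv (Sum.inr i') i
          = if i' = i then (ch.count (Sum.inr i') : ℤ) * (-(c i').sign) else 0 := by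
        intro i' _
        simp only [hvv, Sum.elim_inr, mul_ite, mul_zero]
      rw [Finset.sum_congr rfl hc, Finset.sum_ite_eq' univ i
        (fun i' => (ch.count (Sum.inr i') : ℤ) * (-(c i').sign))]
      simp
    rw [h2] at h0
    have h3 : ∑ j, (ch.count (Sum.inl j) : ℤ) * vv (Sum.inl j) i
        = ∑ j, A i j * ((ch.count (Sum.inl j) : ℕ) : ℤ) := by
      apply Finset.sum_congr rfl
      intro j _
      simp only [hvv, Sum.elim_inl]
      ring
    rw [h3] at h0
    linarith
  -- split into pure and impure chunks
  set pure : List (Fin n ⊕ Fin m) → Prop := fun ch => ∀ z ∈ ch, z.isLeft = true with hpure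
  set MCp := MC.filter pure with hMCp
  set MCi := MC.filter (fun ch => ¬ pure ch) with hMCi
  have hsplit : MCp + MCi = MC := Multiset.filter_add_not pure MC
  have hMCpmem : ∀ ch ∈ MCp, ch ∈ MC ∧ pure ch := by
    intro ch hch
    rw [hMCp, Multiset.mem_filter] at hch
    exact hch
  have hMCimem : ∀ ch ∈ MCi, ch ∈ MC ∧ ¬ pure ch := by
    intro ch hch
    rw [hMCi, Multiset.mem_filter] at hch
    exact hch
  have hpure_inr : ∀ ch, pure ch → ∀ i' : Fin m, ch.count (Sum.inr i') = 0 := by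
    intro ch hp i'
    rw [List.count_eq_zero]
    intro hmem
    have := hp _ hmem
    simp at this
  -- the distinguished solution and the homogeneous multiset
  refine ⟨fun j => (MCi.map fun ch => ch.count (Sum.inl j)).sum,
    MCp.map (fun ch => fun j => ch.count (Sum.inl j)), ?_, ?_, ?_, ?_, ?_⟩
  · -- A x = c
    intro i
    have hcast : ∀ j, (((MCi.map fun ch => ch.count (Sum.inl j)).sum : ℕ) : ℤ)
        = (MCi.map fun ch => ((ch.count (Sum.inl j) : ℕ) : ℤ)).sum := fun j =>
      msum_cast MCi (fun ch => ch.count (Sum.inl j))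
    calc ∑ j, A i j * (((MCi.map fun ch => ch.count (Sum.inl j)).sum : ℕ) : ℤ)
        = ∑ j, (MCi.map fun ch => A i j * ((ch.count (Sum.inl j) : ℕ) : ℤ)).sum := by
          apply Finset.sum_congr rfl
          intro j _
          rw [hcast j, msum_mul_left]
      _ = (MCi.map fun ch => ∑ j, A i j * ((ch.count (Sum.inl j) : ℕ) : ℤ)).sum :=
          msum_swap MCi _
      _ = (MCi.map fun ch => (c i).sign * ((ch.count (Sum.inr i) : ℕ) : ℤ)).sum := by
          congr 1
          apply Multiset.map_congr rfl
          intro ch hch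
          exact key_ch ch (hMCimem ch hch).1 i
      _ = (c i).sign * (MCi.map fun ch => ((ch.count (Sum.inr i) : ℕ) : ℤ)).sum := by
          rw [msum_mul_left]
      _ = c i := by
          rw [← msum_cast MCi (fun ch => ch.count (Sum.inr i))]
          have hsum2 : (MCi.map fun ch => ch.count (Sum.inr i)).sum = (c i).natAbs := by
            have h1 : (MCp.map fun ch => ch.count (Sum.inr i)).sum = 0 := by
              rw [Multiset.sum_eq_zero]
              intro z hz
              rw [Multiset.mem_map] at hz
              obtain ⟨ch, hch, rfl⟩ := hz
              exact hpure_inr ch (hMCpmem ch hch).2 i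
            have h2 := hMCcnt (Sum.inr i)
            rw [← hsplit, Multiset.map_add, Multiset.sum_add, h1, zero_add] at h2
            rw [h2]
            simp [hμ]
          rw [hsum2]
          exact Int.sign_mul_natAbs (c i)
  · -- homogeneous members
    intro w hw i
    rw [Multiset.mem_map] at hw
    obtain ⟨ch, hch, rfl⟩ := hw
    have hkey := key_ch ch (hMCpmem ch hch).1 i
    rw [hpure_inr ch (hMCpmem ch hch).2 i] at hkey
    simpa using hkey
  · -- y = x + sum
    funext j
    have happly : (MCp.map (fun ch => fun j => ch.count (Sum.inl j))).sum j
        = (MCp.map fun ch => ch.count (Sum.inl j)).sum :=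
      msum_apply MCp (fun ch => fun j => ch.count (Sum.inl j)) j
    have h2 := hMCcnt (Sum.inl j)
    rw [← hsplit, Multiset.map_add, Multiset.sum_add] at h2
    have hyj : μ (Sum.inl j) = y j := by simp [hμ]
    rw [hyj] at h2
    show y j = ((fun j => (MCi.map fun ch => ch.count (Sum.inl j)).sum) + fun j =>
      (MCp.map (fun ch => fun j => ch.count (Sum.inl j))).sum j) j
    simp only [Pi.add_apply]
    rw [happly]
    omega
  · -- bound on x
    have hx : ∑ j, (MCi.map fun ch => ch.count (Sum.inl j)).sum
        = (MCi.map fun ch => ∑ j, ch.count (Sum.inl j)).sum := msum_swap MCi _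
    rw [hx]
    have hbnd : ∀ ch ∈ MCi, (∑ j, ch.count (Sum.inl j)) ≤ B ^ m := by
      intro ch hch
      have hlen := (hMCmem ch (hMCimem ch hch).1).2
      have h1 : (∑ j, ch.count (Sum.inl j)) ≤ ∑ a, ch.count a := by
        rw [Fintype.sum_sum_type]
        exact Nat.le_add_right _ _
      rw [sum_count_eq_length ch] at h1
      omega
    have hstep1 : (MCi.map fun ch => ∑ j, ch.count (Sum.inl j)).sum
        ≤ (MCi.map fun _ => B ^ m).sum := msum_le MCi _ _ hbnd
    rw [msum_const] at hstep1
    have hcard : Multiset.card MCi ≤ ∑ i, (c i).natAbs := by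
      have h1 : Multiset.card MCi ≤ (MCi.map fun ch => ∑ i', ch.count (Sum.inr i')).sum := by
        apply msum_card_le
        intro ch hch
        obtain ⟨hchMC, hchimp⟩ := hMCimem ch hch
        have hex : ∃ z ∈ ch, z.isLeft ≠ true := by
          by_contra hcon
          push_neg at hcon
          exact hchimp hcon
        obtain ⟨z, hz, hzne⟩ := hex
        obtain ⟨i'', rfl⟩ : ∃ i'', z = Sum.inr i'' := by
          cases z with
          | inl j => simp at hzne
          | inr i'' => exact ⟨i'', rfl⟩
        have hc1 : 1 ≤ ch.count (Sum.inr i'') := List.count_pos_iff.mpr hz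
        calc 1 ≤ ch.count (Sum.inr i'') := hc1
          _ ≤ ∑ i', ch.count (Sum.inr i') :=
            Finset.single_le_sum (f := fun i' => ch.count (Sum.inr i'))
              (fun _ _ => Nat.zero_le _) (Finset.mem_univ i'')
      have h2 : (MCi.map fun ch => ∑ i', ch.count (Sum.inr i')).sum
          ≤ (MC.map fun ch => ∑ i', ch.count (Sum.inr i')).sum := by
        rw [← hsplit, Multiset.map_add, Multiset.sum_add]
        exact Nat.le_add_left _ _
      have h3 : (MC.map fun ch => ∑ i', ch.count (Sum.inr i')).sum = ∑ i', (c i').natAbs := by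
        rw [← msum_swap MC _]
        apply Finset.sum_congr rfl
        intro i' _
        rw [hMCcnt (Sum.inr i')]
        simp [hμ]
      omega
    calc (MCi.map fun ch => ∑ j, ch.count (Sum.inl j)).sum
        ≤ Multiset.card MCi * B ^ m := hstep1
      _ ≤ (∑ i, (c i).natAbs) * B ^ m := Nat.mul_le_mul_right _ hcard
  · -- bound on homogeneous members
    intro w hw
    rw [Multiset.mem_map] at hw
    obtain ⟨ch, hch, rfl⟩ := hw
    have hlen := (hMCmem ch (hMCpmem ch hch).1).2
    have h1 : (∑ j, ch.count (Sum.inl j)) ≤ ∑ a, ch.count a := by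
      rw [Fintype.sum_sum_type]
      exact Nat.le_add_right _ _
    rw [sum_count_eq_length ch] at h1
    show (∑ j, ch.count (Sum.inl j)) ≤ B ^ m
    omega
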